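/- Let m ≡ 2 (mod 4) with m ≥ 10, n = 2^m − 1, let h be an integer with 0 < h ≤ (m−6)/2, and a = 2^{(m+4)/2} − 1. Then: (i) if h ≥ 4 and h is even, then for every integer k with 1 ≤ k ≤ 2^{(m−4)/2} + 2 or with 2^m − 2^{(m−4)/2} − 1 ≤ k ≤ 2^m − 2, the residue a·k mod n lies in D_{(1,m)}; (ii) if 0 < h ≤ 3, or if h ≥ 4 and h is odd, then for every integer k with 1 ≤ k ≤ 2^{(m−4)/2} or with 2^m − 2^{(m−4)/2} − 1 ≤ k ≤ 2^m − 2, the residue a·k mod n lies in D_{(1,m)}. -/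

import Mathlib

open Polynomial

noncomputable def wt2 (a : ℕ) : ℕ := (Nat.digits 2 a).sum

noncomputable def ell (m i : ℕ) : ℕ :=
  sInf {l : ℕ | 0 < l ∧ i * 2 ^ l % (2 ^ m - 1) = i % (2 ^ m - 1)}

noncomputable def coset (m i : ℕ) : Finset ℕ :=
  (Finset.range (ell m i)).image (fun j => i * 2 ^ j % (2 ^ m - 1))

noncomputable def rho (m i : ℕ) : ℕ := ((coset m i).filter (fun x => x % 2 = 0)).card

noncomputable def vv (m i : ℕ) : ℕ := m * rho m i / ell m i % 2

noncomputable def Tset (m j : ℕ) : Finset ℕ :=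
  (Finset.range (2 ^ m - 1)).filter (fun i => vv m i = j)

noncomputable def Nset (m j : ℕ) : Finset ℕ :=
  (Finset.range (2 ^ m - 1)).filter (fun a => a ≠ 0 ∧ wt2 a % 2 = j)

noncomputable def epsilon (h a : ℕ) : ℕ :=
  if a = 2 ^ h - 1 then 1 else sInf {t : ℕ | 2 ^ h - 1 ≤ 2 ^ t * a}

noncomputable def kappa (h a : ℕ) : ℕ := epsilon h a % 2

noncomputable def leader (m i : ℕ) : ℕ := sInf {x : ℕ | x ∈ coset m i}

noncomputable def uu (m h i : ℕ) : ℕ :=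
  if leader m i = 1 then (vv m 1 + h + 1) % 2
  else if leader m i % 2 = 1 ∧ leader m i ≤ 2 ^ h - 1 then
    (kappa h (leader m i) + vv m (leader m i)) % 2
  else vv m (leader m i)

noncomputable def Dset (m h j : ℕ) : Finset ℕ :=
  (Finset.range (2 ^ m - 1)).filter (fun i => uu m h i = j)

noncomputable def cyclicCode (m : ℕ) (α : GaloisField 2 m) (T : Set ℕ) :
    Submodule (ZMod 2) (Polynomial (ZMod 2)) :=
  Polynomial.degreeLT (ZMod 2) (2 ^ m - 1) ⊓
    ⨅ j ∈ T, LinearMap.ker (Polynomial.aeval (α ^ j)).toLinearMap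

def minDistGE (C : Submodule (ZMod 2) (Polynomial (ZMod 2))) (d : ℕ) : Prop :=
  ∀ c ∈ C, c ≠ 0 → d ≤ c.support.card

lemma wt2_zero : wt2 0 = 0 := by simp [wt2]

lemma wt2_bit (y b : ℕ) (hb : b < 2) : wt2 (2 * y + b) = b + wt2 y := by
  rcases Nat.eq_zero_or_pos (2 * y + b) with h | h
  · have : y = 0 ∧ b = 0 := by omega
    simp [this.1, this.2, wt2]
  · have h1 : (2 * y + b) % 2 = b := by omega
    have h2 : (2 * y + b) / 2 = y := by omega
    rw [wt2, Nat.digits_def' (by norm_num : 1 < 2) h, h1, h2, List.sum_cons]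
    rfl

lemma wt2_sum : ∀ M i, i < 2 ^ M → wt2 i = ∑ b ∈ Finset.range M, i / 2 ^ b % 2 := by
  intro M
  induction M with
  | zero => intro i hi; interval_cases i; simp [wt2]
  | succ M ih =>
    intro i hi
    have hb : i = 2 * (i / 2) + i % 2 := by omega
    have h2 : i / 2 < 2 ^ M := by
      have : (2:ℕ) ^ (M+1) = 2 * 2 ^ M := by ring
      omega
    rw [Finset.sum_range_succ']
    have : ∀ b, i / 2 ^ (b + 1) % 2 = (i / 2) / 2 ^ b % 2 := by
      intro b
      rw [pow_succ, mul_comm, ← Nat.div_div_eq_div_mul]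
    simp only [this, pow_zero, Nat.div_one]
    rw [← ih (i/2) h2]
    conv_lhs => rw [hb]
    rw [wt2_bit _ _ (by omega)]
    omega

lemma wt2_le (M i : ℕ) (h : i < 2 ^ M) : wt2 i ≤ M := by
  rw [wt2_sum M i h]
  calc ∑ b ∈ Finset.range M, i / 2 ^ b % 2 ≤ ∑ b ∈ Finset.range M, 1 :=
        Finset.sum_le_sum (fun b _ => by omega)
    _ = M := by simp

lemma wt2_add_pow_mul : ∀ t x y, x < 2 ^ t → wt2 (x + y * 2 ^ t) = wt2 x + wt2 y := by
  intro t
  induction t with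
  | zero => intro x y hx; interval_cases x; simp [wt2_zero]
  | succ t ih =>
    intro x y hx
    have hp : (2:ℕ) ^ (t+1) = 2 * 2 ^ t := by ring
    have hx2 : x / 2 < 2 ^ t := by omega
    have key : x + y * 2 ^ (t+1) = 2 * (x / 2 + y * 2 ^ t) + x % 2 := by
      have : y * 2 ^ (t+1) = 2 * (y * 2 ^ t) := by rw [hp]; ring
      omega
    rw [key, wt2_bit _ _ (by omega), ih _ _ hx2]
    have : wt2 x = x % 2 + wt2 (x / 2) := by
      conv_lhs => rw [show x = 2 * (x/2) + x % 2 by omega]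
      rw [wt2_bit _ _ (by omega)]
    omega

lemma wt2_compl : ∀ t x, x < 2 ^ t → wt2 (2 ^ t - 1 - x) = t - wt2 x := by
  intro t
  induction t with
  | zero => intro x hx; interval_cases x; simp [wt2_zero]
  | succ t ih =>
    intro x hx
    have hp : (2:ℕ) ^ (t+1) = 2 * 2 ^ t := by ring
    have hpos : 0 < (2:ℕ) ^ t := Nat.pow_pos (by norm_num)
    have hx2 : x / 2 < 2 ^ t := by omega
    have key : 2 ^ (t+1) - 1 - x = 2 * (2 ^ t - 1 - x / 2) + (1 - x % 2) := by omega
    rw [key, wt2_bit _ _ (by omega), ih _ hx2]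
    have hw : wt2 x = x % 2 + wt2 (x / 2) := by
      conv_lhs => rw [show x = 2 * (x/2) + x % 2 by omega]
      rw [wt2_bit _ _ (by omega)]
    have h1 : wt2 (x/2) ≤ t := wt2_le t _ hx2
    omega

section
variable (m : ℕ)

lemma n_odd (hm : 0 < m) : (2 ^ m - 1) % 2 = 1 := by
  have : (2:ℕ) ^ m = 2 * 2 ^ (m-1) := by
    rw [← pow_succ']; congr 1; omega
  have hpos : 0 < (2:ℕ) ^ (m-1) := Nat.pow_pos (by norm_num)
  omega

lemma cop2 (hm : 0 < m) (j : ℕ) : Nat.Coprime (2 ^ m - 1) (2 ^ j) := by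
  apply Nat.Coprime.pow_right
  exact Nat.coprime_two_right.mpr (Nat.odd_iff.mpr (n_odd m hm))

lemma mod_formula (hm : 0 < m) (i j : ℕ) (hi : i < 2 ^ m - 1) (hj : j ≤ m) :
    i * 2 ^ j % (2 ^ m - 1) = i / 2 ^ (m - j) + i % 2 ^ (m - j) * 2 ^ j ∧
      i / 2 ^ (m - j) + i % 2 ^ (m - j) * 2 ^ j < 2 ^ m - 1 := by
  set n := 2 ^ m - 1 with hn
  set c := i / 2 ^ (m - j) with hc
  set d := i % 2 ^ (m - j) with hd
  have hpmj : 0 < (2:ℕ) ^ (m - j) := Nat.pow_pos (by norm_num)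
  have hpj : 0 < (2:ℕ) ^ j := Nat.pow_pos (by norm_num)
  have hdm : d < 2 ^ (m - j) := Nat.mod_lt _ hpmj
  have hsplit : i = c * 2 ^ (m - j) + d := by
    rw [hc, hd]; exact (Nat.div_add_mod' _ _).symm
  have hpow : (2:ℕ) ^ (m - j) * 2 ^ j = 2 ^ m := by
    rw [← pow_add]; congr 1; omega
  have hm2 : (2:ℕ) ≤ 2 ^ m := by
    calc (2:ℕ) = 2 ^ 1 := (pow_one 2).symm
    _ ≤ 2 ^ m := Nat.pow_le_pow_right (by norm_num) hm
  have hcb : c < 2 ^ j := by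
    rw [hc, Nat.div_lt_iff_lt_mul hpmj, mul_comm, hpow]
    omega
  have hkey : i * 2 ^ j = c * n + (c + d * 2 ^ j) := by
    have h1 : i * 2 ^ j = c * 2 ^ m + d * 2 ^ j := by
      rw [hsplit, Nat.add_mul, mul_assoc, hpow]
    have hn1 : (2:ℕ) ^ m = n + 1 := by omega
    rw [h1, hn1, Nat.mul_add, mul_one]
    ring
  have hle : c + d * 2 ^ j ≤ n := by
    have h1 : d * 2 ^ j ≤ (2 ^ (m - j) - 1) * 2 ^ j := by
      apply Nat.mul_le_mul_right; omega
    have h2 : (2 ^ (m - j) - 1) * 2 ^ j = 2 ^ m - 2 ^ j := by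
      rw [tsub_mul, one_mul, hpow]
    have h3 : (2:ℕ) ^ j ≤ 2 ^ m := Nat.pow_le_pow_right (by norm_num) (by omega)
    omega
  have hne : c + d * 2 ^ j ≠ n := by
    intro heq
    have hdvd : n ∣ i * 2 ^ j := by
      rw [hkey, heq]
      exact ⟨c + 1, by ring⟩
    have hi0 : i = 0 := Nat.eq_zero_of_dvd_of_lt
      ((Nat.Coprime.dvd_of_dvd_mul_right (cop2 m hm j)) hdvd) hi
    have hc0 : c = 0 := by rw [hc, hi0]; simp
    have hd0 : d = 0 := by rw [hd, hi0]; simp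
    rw [hc0, hd0] at heq
    simp at heq
    omega
  have hlt : c + d * 2 ^ j < n := lt_of_le_of_ne hle hne
  refine ⟨?_, hlt⟩
  rw [hkey, mul_comm c n, Nat.mul_add_mod, Nat.mod_eq_of_lt hlt]

lemma wt2_shift (hm : 0 < m) (i j : ℕ) (hi : i < 2 ^ m - 1) (hj : j ≤ m) :
    wt2 (i * 2 ^ j % (2 ^ m - 1)) = wt2 i := by
  obtain ⟨heq, -⟩ := mod_formula m hm i j hi hj
  rw [heq]
  have hpmj : 0 < (2:ℕ) ^ (m - j) := Nat.pow_pos (by norm_num)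
  have hdm : i % 2 ^ (m - j) < 2 ^ (m - j) := Nat.mod_lt _ hpmj
  have hcb : i / 2 ^ (m - j) < 2 ^ j := by
    rw [Nat.div_lt_iff_lt_mul hpmj, mul_comm, ← pow_add,
      show m - j + j = m by omega]
    omega
  rw [wt2_add_pow_mul j _ _ hcb]
  conv_rhs => rw [(Nat.mod_add_div' i (2 ^ (m-j))).symm]
  rw [wt2_add_pow_mul (m-j) _ _ hdm]
  ring

lemma shift_parity (hm : 0 < m) (i j : ℕ) (hi : i < 2 ^ m - 1) (hjm : j < m) :
    i * 2 ^ j % (2 ^ m - 1) % 2 = i / 2 ^ (if j = 0 then 0 else m - j) % 2 := by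
  obtain ⟨heq, -⟩ := mod_formula m hm i j hi (le_of_lt hjm)
  rw [heq]
  by_cases hj0 : j = 0
  · subst hj0
    simp only [if_pos rfl, pow_zero, Nat.div_one, mul_one, Nat.sub_zero]
    have h0 : i / 2 ^ m = 0 := Nat.div_eq_of_lt (by omega)
    have h1 : i % 2 ^ m = i := Nat.mod_eq_of_lt (by omega)
    rw [h0, h1]
    norm_num
  · rw [if_neg hj0]
    have : i % 2 ^ (m - j) * 2 ^ j = 2 * (i % 2 ^ (m - j) * 2 ^ (j-1)) := by
      rw [show (2:ℕ) ^ j = 2 * 2 ^ (j-1) by rw [← pow_succ']; congr 1; omega]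
      ring
    omega
end

section
variable (m i : ℕ)

lemma mem_S (hm : 0 < m) : m ∈ {l : ℕ | 0 < l ∧ i * 2 ^ l % (2 ^ m - 1) = i % (2 ^ m - 1)} := by
  refine ⟨hm, ?_⟩
  have h1 : 1 ≤ (2:ℕ) ^ m := Nat.one_le_two_pow
  have : i * 2 ^ m = i * (2 ^ m - 1) + i := by
    rw [← Nat.mul_succ]; congr 1; omega
  rw [this, Nat.mul_add_mod']

lemma ell_pos (hm : 0 < m) : 0 < ell m i := (Nat.sInf_mem ⟨m, mem_S m i hm⟩).1

lemma ell_le (hm : 0 < m) : ell m i ≤ m := Nat.sInf_le (mem_S m i hm)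

lemma ell_spec (hm : 0 < m) : i * 2 ^ ell m i % (2 ^ m - 1) = i % (2 ^ m - 1) :=
  (Nat.sInf_mem (⟨m, mem_S m i hm⟩ : Set.Nonempty _)).2

lemma ell_min (hm : 0 < m) (t : ℕ) (ht : 0 < t) (ht2 : t < ell m i)
    (h : i * 2 ^ t % (2 ^ m - 1) = i % (2 ^ m - 1)) : False := by
  have : ell m i ≤ t := Nat.sInf_le ⟨ht, h⟩
  omega

lemma step (hm : 0 < m) (j : ℕ) :
    i * 2 ^ (j + ell m i) % (2 ^ m - 1) = i * 2 ^ j % (2 ^ m - 1) := by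
  rw [add_comm j, pow_add, ← mul_assoc, ← Nat.mod_mul_mod, ell_spec m i hm,
    Nat.mod_mul_mod]

lemma period (hm : 0 < m) (q j : ℕ) :
    i * 2 ^ (j + q * ell m i) % (2 ^ m - 1) = i * 2 ^ j % (2 ^ m - 1) := by
  induction q with
  | zero => simp
  | succ q ih =>
    have : j + (q + 1) * ell m i = (j + q * ell m i) + ell m i := by ring
    rw [this, step m i hm, ih]

lemma reduce (hm : 0 < m) (j : ℕ) :
    i * 2 ^ j % (2 ^ m - 1) = i * 2 ^ (j % ell m i) % (2 ^ m - 1) := by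
  conv_lhs => rw [← Nat.mod_add_div' j (ell m i)]
  rw [period m i hm]

lemma cancel (hm : 0 < m) (a b j : ℕ)
    (h : a * 2 ^ j % (2 ^ m - 1) = b * 2 ^ j % (2 ^ m - 1)) :
    a % (2 ^ m - 1) = b % (2 ^ m - 1) :=
  Nat.ModEq.cancel_right_of_coprime (cop2 m hm j) h

lemma f_inj (hm : 0 < m) (hi : i < 2 ^ m - 1) :
    Set.InjOn (fun j => i * 2 ^ j % (2 ^ m - 1)) (Finset.range (ell m i)) := by
  have key : ∀ j j', j ≤ j' → j' < ell m i →
      i * 2 ^ j % (2 ^ m - 1) = i * 2 ^ j' % (2 ^ m - 1) → j = j' := by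
    intro j j' hle hlt heq
    by_contra hne
    have ht : 0 < j' - j := by omega
    have hsp : i * 2 ^ j' = (i * 2 ^ (j' - j)) * 2 ^ j := by
      rw [mul_assoc, ← pow_add]
      congr 2
      omega
    have : (i * 2 ^ (j' - j)) % (2 ^ m - 1) = i % (2 ^ m - 1) := by
      apply cancel m hm _ _ j
      rw [← hsp]
      exact heq.symm
    exact ell_min m i hm (j' - j) ht (by omega) (by
      rwa [Nat.mod_eq_of_lt hi] at this ⊢)
  intro j hj j' hj' heq
  simp only [Finset.coe_range, Set.mem_Iio] at hj hj'
  rcases le_total j j' with h | h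
  · exact key j j' h hj' heq
  · exact (key j' j h hj heq.symm).symm

lemma ell_dvd (hm : 0 < m) (hi : i < 2 ^ m - 1) : ell m i ∣ m := by
  rcases Nat.eq_zero_or_pos (m % ell m i) with h0 | h0
  · exact Nat.dvd_of_mod_eq_zero h0
  · exfalso
    apply ell_min m i hm (m % ell m i) h0 (Nat.mod_lt _ (ell_pos m i hm))
    rw [← reduce m i hm m, (mem_S m i hm).2]

lemma coset_eq (hm : 0 < m) :
    coset m i = (Finset.range m).image (fun j => i * 2 ^ j % (2 ^ m - 1)) := by
  apply Finset.Subset.antisymm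
  · exact Finset.image_subset_image (by
      simpa using Finset.range_subset_range.mpr (ell_le m i hm))
  · intro x hx
    simp only [Finset.mem_image, Finset.mem_range] at hx
    obtain ⟨j, hj, hfj⟩ := hx
    show x ∈ (Finset.range (ell m i)).image (fun j => i * 2 ^ j % (2 ^ m - 1))
    apply Finset.mem_image.mpr
    refine ⟨j % ell m i, Finset.mem_range.mpr (Nat.mod_lt _ (ell_pos m i hm)), ?_⟩
    rw [← reduce m i hm]
    exact hfj
end

section
variable (m i : ℕ)

lemma sum_parity (hm : 0 < m) (hi : i < 2 ^ m - 1) :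
    ∑ j ∈ Finset.range m, (i * 2 ^ j % (2 ^ m - 1)) % 2 = wt2 i := by
  have h2m : 1 ≤ (2:ℕ) ^ m := Nat.one_le_two_pow
  rw [wt2_sum m i (by omega)]
  refine Finset.sum_bij' (fun j _ => if j = 0 then 0 else m - j)
    (fun b _ => if b = 0 then 0 else m - b) ?_ ?_ ?_ ?_ ?_
  · intro a ha
    simp only [Finset.mem_range] at ha ⊢
    split <;> omega
  · intro a ha
    simp only [Finset.mem_range] at ha ⊢
    split <;> omega
  · intro a ha
    simp only [Finset.mem_range] at ha
    split
    · next h => subst h; simp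
    · next h => rw [if_neg (by omega : ¬ m - a = 0)]; omega
  · intro a ha
    simp only [Finset.mem_range] at ha
    split
    · next h => subst h; simp
    · next h => rw [if_neg (by omega : ¬ m - a = 0)]; omega
  · intro a ha
    simp only [Finset.mem_range] at ha
    exact shift_parity m hm i a hi ha

lemma sum_periodic (hm : 0 < m) : ∀ q : ℕ,
    ∑ j ∈ Finset.range (q * ell m i), (i * 2 ^ j % (2 ^ m - 1)) % 2 =
      q * ∑ j ∈ Finset.range (ell m i), (i * 2 ^ j % (2 ^ m - 1)) % 2 := by
  intro q
  induction q with
  | zero => simp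
  | succ q ih =>
    have hq : (q + 1) * ell m i = q * ell m i + ell m i := by ring
    rw [hq, Finset.sum_range_add, ih]
    have : ∀ x, i * 2 ^ (q * ell m i + x) % (2 ^ m - 1) =
        i * 2 ^ x % (2 ^ m - 1) := by
      intro x
      rw [add_comm, period m i hm]
    simp only [this]
    ring

lemma rho_eq (hm : 0 < m) (hi : i < 2 ^ m - 1) :
    rho m i = ell m i - ∑ j ∈ Finset.range (ell m i), (i * 2 ^ j % (2 ^ m - 1)) % 2 := by
  have himg : (coset m i).filter (fun x => x % 2 = 0) =
      ((Finset.range (ell m i)).filter (fun j => (i * 2 ^ j % (2 ^ m - 1)) % 2 = 0)).image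
        (fun j => i * 2 ^ j % (2 ^ m - 1)) := by
    have h0 : coset m i =
        (Finset.range (ell m i)).image (fun j => i * 2 ^ j % (2 ^ m - 1)) := rfl
    rw [h0, Finset.filter_image]
  rw [rho, himg, Finset.card_image_of_injOn ((f_inj m i hm hi).mono (by
    intro x hx
    simp only [Finset.coe_filter, Set.mem_setOf_eq] at hx
    simpa using hx.1))]
  have h1 : ∑ j ∈ Finset.range (ell m i),
      ((if (i * 2 ^ j % (2 ^ m - 1)) % 2 = 0 then 1 else 0) +
        (i * 2 ^ j % (2 ^ m - 1)) % 2) = ell m i := by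
    rw [Finset.sum_congr rfl (fun j _ => by split <;> omega :
      ∀ j ∈ Finset.range (ell m i),
      ((if (i * 2 ^ j % (2 ^ m - 1)) % 2 = 0 then 1 else 0) +
        (i * 2 ^ j % (2 ^ m - 1)) % 2) = 1)]
    simp
  rw [Finset.sum_add_distrib] at h1
  rw [Finset.card_filter]
  omega

lemma vv_eq (hm : 0 < m) (hi : i < 2 ^ m - 1) : vv m i = (m - wt2 i) % 2 := by
  obtain ⟨q, hq⟩ := ell_dvd m i hm hi
  set L := ell m i with hL
  have hLpos : 0 < L := ell_pos m i hm
  set T := ∑ j ∈ Finset.range L, (i * 2 ^ j % (2 ^ m - 1)) % 2 with hT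
  have hTle : T ≤ L := by
    rw [hT]
    calc ∑ j ∈ Finset.range L, (i * 2 ^ j % (2 ^ m - 1)) % 2
        ≤ ∑ j ∈ Finset.range L, 1 := Finset.sum_le_sum (fun j _ => by omega)
      _ = L := by simp
  have hwt : q * T = wt2 i := by
    rw [← sum_parity m i hm hi, hT, ← sum_periodic m i hm q, ← hL]
    congr 1
    rw [hq]; ring
  have hrho : rho m i = L - T := rho_eq m i hm hi
  have hdiv : m * rho m i / L = q * (L - T) := by
    rw [hrho, hq, mul_comm L q, mul_assoc, mul_comm L (L - T), ← mul_assoc]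
    exact Nat.mul_div_cancel _ hLpos
  have hsub : q * (L - T) + q * T = q * L := by
    rw [← Nat.mul_add]
    congr 1
    omega
  have hwtle : wt2 i ≤ m := by
    rw [← hwt]
    calc q * T ≤ q * L := Nat.mul_le_mul_left _ hTle
      _ = m := by rw [hq]; ring
  have hm2 : q * L = m := by rw [hq]; ring
  rw [vv, hdiv]
  omega
end

section
variable (m i : ℕ)

lemma self_mem_coset (hm : 0 < m) (hi : i < 2 ^ m - 1) : i ∈ coset m i := by
  have : i * 2 ^ 0 % (2 ^ m - 1) = i := by
    simp [Nat.mod_eq_of_lt hi]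
  refine Finset.mem_image.mpr ⟨0, Finset.mem_range.mpr (ell_pos m i hm), this⟩

lemma leader_mem (hm : 0 < m) (hi : i < 2 ^ m - 1) : leader m i ∈ coset m i :=
  Nat.sInf_mem ⟨i, self_mem_coset m i hm hi⟩

lemma leader_le (hm : 0 < m) (hi : i < 2 ^ m - 1) : leader m i ≤ i :=
  Nat.sInf_le (self_mem_coset m i hm hi)

lemma leader_lt (hm : 0 < m) (hi : i < 2 ^ m - 1) : leader m i < 2 ^ m - 1 :=
  lt_of_le_of_lt (leader_le m i hm hi) hi

lemma wt2_leader (hm : 0 < m) (hi : i < 2 ^ m - 1) : wt2 (leader m i) = wt2 i := by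
  have := leader_mem m i hm hi
  rw [coset_eq m i hm] at this
  obtain ⟨j, hj, hfj⟩ := Finset.mem_image.mp this
  rw [← hfj, wt2_shift m hm i j hi (le_of_lt (Finset.mem_range.mp hj))]

lemma wt2_one : wt2 1 = 1 := by
  have := wt2_sum 1 1 (by norm_num)
  simpa using this

lemma main_mem (h : ℕ) (hm : 0 < m) (hme : m % 2 = 0) (hh : 0 < h)
    (hi : i < 2 ^ m - 1) (hodd : wt2 i % 2 = 1) (hwh : h < wt2 i) :
    i ∈ Dset m h 1 := by
  have hL := wt2_leader m i hm hi
  have hLlt := leader_lt m i hm hi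
  have hne1 : leader m i ≠ 1 := by
    intro he
    rw [he, wt2_one] at hL
    omega
  have hgt : ¬ (leader m i % 2 = 1 ∧ leader m i ≤ 2 ^ h - 1) := by
    rintro ⟨-, hle⟩
    have : wt2 (leader m i) ≤ h := wt2_le h _ (by
      have : 1 ≤ (2:ℕ) ^ h := Nat.one_le_two_pow
      omega)
    omega
  have huu : uu m h i = 1 := by
    rw [uu, if_neg hne1, if_neg hgt, vv_eq m _ hm hLlt, hL]
    have h2m : 1 ≤ (2:ℕ) ^ m := Nat.one_le_two_pow
    have : wt2 i ≤ m := wt2_le m i (by omega)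
    omega
  exact Finset.mem_filter.mpr ⟨Finset.mem_range.mpr hi, huu⟩
end

lemma wt2_pow (t : ℕ) : wt2 (2 ^ t) = 1 := by
  have h := wt2_add_pow_mul t 0 1 (Nat.pow_pos (by norm_num))
  simpa [wt2_zero, wt2_one] using h

lemma wt2_15 : wt2 15 = 4 := by
  rw [wt2_sum 4 15 (by norm_num), Finset.sum_range_succ, Finset.sum_range_succ,
    Finset.sum_range_succ, Finset.sum_range_succ, Finset.sum_range_zero]
  norm_num

lemma eq15 (x : ℕ) (hx : x < 16) (hw : wt2 x = 4) : x = 15 := by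
  rw [wt2_sum 4 x (by omega), Finset.sum_range_succ, Finset.sum_range_succ,
    Finset.sum_range_succ, Finset.sum_range_succ, Finset.sum_range_zero] at hw
  norm_num at hw
  interval_cases x <;> omega

lemma wt_special (T k : ℕ) (hk1 : 1 ≤ k) (hk2 : k ≤ 2 ^ T) :
    wt2 ((2 ^ T - 1) * k) = T := by
  have hps : 0 < (2:ℕ) ^ T := Nat.pow_pos (by norm_num)
  have hK : 2 ^ T ≤ k * 2 ^ T := Nat.le_mul_of_pos_left _ hk1
  have hK2 : k ≤ k * 2 ^ T := Nat.le_mul_of_pos_right _ hps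
  have h1 : (2 ^ T - 1) * k = k * 2 ^ T - k := by
    rw [tsub_mul, one_mul, mul_comm]
  have h2 : (2 ^ T - 1) * k = (2 ^ T - k) + (k - 1) * 2 ^ T := by
    rw [h1, tsub_mul, one_mul]
    omega
  rw [h2, wt2_add_pow_mul T _ _ (by omega)]
  have h3 : 2 ^ T - k = 2 ^ T - 1 - (k - 1) := by omega
  rw [h3, wt2_compl T (k-1) (by omega)]
  have h4 : wt2 (k-1) ≤ T := wt2_le T _ (by omega)
  omega

section
variable (m s : ℕ)

lemma leader15 (hm : m = 2 * s) (hs : 5 ≤ s) :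
    leader m (15 * 2 ^ (s - 2)) = 15 := by
  have hm0 : 0 < m := by omega
  set i1 := 15 * 2 ^ (s - 2) with hi1
  have hp1 : (2:ℕ) ^ (s + 2) = 16 * 2 ^ (s - 2) := by
    rw [show s + 2 = 4 + (s - 2) by omega, pow_add]
    norm_num
  have hp2 : (2:ℕ) ^ (s + 2) ≤ 2 ^ (m - 1) :=
    Nat.pow_le_pow_right (by norm_num) (by omega)
  have hp3 : (2:ℕ) ^ m = 2 * 2 ^ (m - 1) := by
    rw [← pow_succ']; congr 1; omega
  have hp4 : 0 < (2:ℕ) ^ (s - 2) := Nat.pow_pos (by norm_num)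
  have hi1lt : i1 < 2 ^ m - 1 := by omega
  have hwt : wt2 i1 = 4 := by
    have := wt2_add_pow_mul (s - 2) 0 15 hp4
    simpa [wt2_zero, wt2_15] using this
  have hmem15 : 15 ∈ coset m i1 := by
    rw [coset_eq m i1 hm0]
    apply Finset.mem_image.mpr
    refine ⟨m - (s - 2), Finset.mem_range.mpr (by omega), ?_⟩
    have he : i1 * 2 ^ (m - (s - 2)) = 15 * 2 ^ m := by
      rw [hi1, mul_assoc, ← pow_add]
      congr 2
      omega
    rw [he, show 15 * 2 ^ m = 15 * (2 ^ m - 1) + 15 by omega, Nat.mul_add_mod']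
    exact Nat.mod_eq_of_lt (by omega)
  have hbound : ∀ b ∈ {x : ℕ | x ∈ coset m i1}, 15 ≤ b := by
    intro b hb
    simp only [Set.mem_setOf_eq] at hb
    rw [coset_eq m i1 hm0] at hb
    obtain ⟨j, hj, hfj⟩ := Finset.mem_image.mp hb
    have hwb : wt2 b = 4 := by
      rw [← hfj, wt2_shift m hm0 i1 j hi1lt (le_of_lt (Finset.mem_range.mp hj))]
      exact hwt
    by_contra hlt
    have := eq15 b (by omega) hwb
    omega
  exact le_antisymm (Nat.sInf_le hmem15) (le_csInf ⟨15, hmem15⟩ hbound)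

lemma eps15 (h : ℕ) (hh : 5 ≤ h) : epsilon h 15 = h - 3 := by
  have e1 : (2:ℕ) ^ h = 8 * 2 ^ (h - 3) := by
    rw [show h = 3 + (h - 3) by omega, pow_add]; norm_num
  have e2 : (2:ℕ) ^ h = 16 * 2 ^ (h - 4) := by
    rw [show h = 4 + (h - 4) by omega, pow_add]; norm_num
  have e3 : (2:ℕ) ≤ 2 ^ (h - 4) := by
    calc (2:ℕ) = 2 ^ 1 := (pow_one 2).symm
    _ ≤ 2 ^ (h - 4) := Nat.pow_le_pow_right (by norm_num) (by omega)
  rw [epsilon, if_neg (by omega)]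
  have hmem : h - 3 ∈ {t : ℕ | 2 ^ h - 1 ≤ 2 ^ t * 15} := by
    simp only [Set.mem_setOf_eq]
    omega
  refine le_antisymm (Nat.sInf_le hmem) (le_csInf ⟨h - 3, hmem⟩ ?_)
  intro t ht
  simp only [Set.mem_setOf_eq] at ht
  by_contra hlt
  have h4 : 2 ^ t * 15 ≤ 2 ^ (h - 4) * 15 :=
    Nat.mul_le_mul_right _ (Nat.pow_le_pow_right (by norm_num) (by omega))
  omega

lemma kappa15 (h : ℕ) (hh4 : 4 ≤ h) (heven : h % 2 = 0) : kappa h 15 = 1 := by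
  rcases Nat.lt_or_ge h 5 with h5 | h5
  · have : h = 4 := by omega
    subst this
    rw [kappa, epsilon, if_pos (by norm_num)]
  · rw [kappa, eps15 h h5]
    omega

lemma case_k1 (h : ℕ) (hm : m = 2 * s) (hs : 5 ≤ s) (hme : m % 2 = 0)
    (hh4 : 4 ≤ h) (heven : h % 2 = 0) :
    (15 * 2 ^ (s - 2)) ∈ Dset m h 1 := by
  have hm0 : 0 < m := by omega
  have hp1 : (2:ℕ) ^ (s + 2) = 16 * 2 ^ (s - 2) := by
    rw [show s + 2 = 4 + (s - 2) by omega, pow_add]; norm_num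
  have hp2 : (2:ℕ) ^ (s + 2) ≤ 2 ^ (m - 1) :=
    Nat.pow_le_pow_right (by norm_num) (by omega)
  have hp3 : (2:ℕ) ^ m = 2 * 2 ^ (m - 1) := by
    rw [← pow_succ']; congr 1; omega
  have hp4 : 0 < (2:ℕ) ^ (s - 2) := Nat.pow_pos (by norm_num)
  have hi1lt : 15 * 2 ^ (s - 2) < 2 ^ m - 1 := by omega
  have h16 : (16:ℕ) ≤ 2 ^ h :=
    calc (16:ℕ) = 2 ^ 4 := by norm_num
    _ ≤ 2 ^ h := Nat.pow_le_pow_right (by norm_num) hh4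
  have huu : uu m h (15 * 2 ^ (s - 2)) = 1 := by
    rw [uu, leader15 m s hm hs, if_neg (by norm_num),
      if_pos ⟨by norm_num, by omega⟩, kappa15 h hh4 heven,
      vv_eq m 15 hm0 (by omega), wt2_15]
    omega
  exact Finset.mem_filter.mpr ⟨Finset.mem_range.mpr hi1lt, huu⟩
end

section
variable (m s : ℕ)

lemma klow (hm : m = 2 * s) (hs : 5 ≤ s) (k : ℕ) (hk1 : 1 ≤ k)
    (hk2 : k ≤ 2 ^ (s - 2)) :
    (2 ^ (s + 2) - 1) * k < 2 ^ m - 1 ∧ wt2 ((2 ^ (s + 2) - 1) * k) = s + 2 := by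
  have hP : (2:ℕ) ^ (s + 2) * 2 ^ (s - 2) = 2 ^ m := by
    rw [← pow_add]; congr 1; omega
  have hAk : (2 ^ (s + 2) - 1) * k ≤ (2 ^ (s + 2) - 1) * 2 ^ (s - 2) :=
    Nat.mul_le_mul_left _ hk2
  have h2 : (2 ^ (s + 2) - 1) * 2 ^ (s - 2) = 2 ^ m - 2 ^ (s - 2) := by
    rw [tsub_mul, one_mul, hP]
  have h3 : (2:ℕ) ≤ 2 ^ (s - 2) :=
    calc (2:ℕ) = 2 ^ 1 := (pow_one 2).symm
    _ ≤ 2 ^ (s - 2) := Nat.pow_le_pow_right (by norm_num) (by omega)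
  have h4 : (2:ℕ) ^ (s - 2) ≤ 2 ^ m := Nat.pow_le_pow_right (by norm_num) (by omega)
  refine ⟨lt_of_le_of_lt (le_trans hAk (le_of_eq h2)) (by omega),
    wt_special (s + 2) k hk1 ?_⟩
  calc k ≤ 2 ^ (s - 2) := hk2
  _ ≤ 2 ^ (s + 2) := Nat.pow_le_pow_right (by norm_num) (by omega)

lemma khigh (hm : m = 2 * s) (hs : 5 ≤ s) (k : ℕ)
    (hk1 : 2 ^ m - 2 ^ (s - 2) - 1 ≤ k) (hk2 : k ≤ 2 ^ m - 2) :
    (2 ^ (s + 2) - 1) * k % (2 ^ m - 1) < 2 ^ m - 1 ∧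
      wt2 ((2 ^ (s + 2) - 1) * k % (2 ^ m - 1)) = s - 2 := by
  have h2m : (2:ℕ) ≤ 2 ^ m :=
    calc (2:ℕ) = 2 ^ 1 := (pow_one 2).symm
    _ ≤ 2 ^ m := Nat.pow_le_pow_right (by norm_num) (by omega)
  set n := 2 ^ m - 1 with hn
  set A := 2 ^ (s + 2) - 1 with hA
  set t := n - k with ht
  have hps : (2:ℕ) ≤ 2 ^ (s - 2) :=
    calc (2:ℕ) = 2 ^ 1 := (pow_one 2).symm
    _ ≤ 2 ^ (s - 2) := Nat.pow_le_pow_right (by norm_num) (by omega)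
  have ht1 : 1 ≤ t := by omega
  have ht2 : t ≤ 2 ^ (s - 2) := by omega
  obtain ⟨hxlt, hxwt⟩ := klow m s hm hs t ht1 ht2
  set x := A * t with hx
  have hA1 : 1 ≤ A := by
    have : (4:ℕ) ≤ 2 ^ (s + 2) :=
      calc (4:ℕ) = 2 ^ 2 := by norm_num
      _ ≤ 2 ^ (s + 2) := Nat.pow_le_pow_right (by norm_num) (by omega)
    omega
  have hx1 : 1 ≤ x := by
    calc 1 = 1 * 1 := by norm_num
    _ ≤ A * t := Nat.mul_le_mul hA1 ht1
  have hkey : A * k + x = A * n := by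
    rw [hx, ← Nat.mul_add]
    congr 1
    omega
  have hnA : n ≤ A * n := Nat.le_mul_of_pos_left n (by omega)
  have hsub : (A - 1) * n = A * n - n := by rw [tsub_mul, one_mul]
  have hrw : A * k = (A - 1) * n + (n - x) := by omega
  have hmod : A * k % n = n - x := by
    rw [hrw, Nat.mul_add_mod']
    exact Nat.mod_eq_of_lt (by omega)
  rw [hmod]
  refine ⟨by omega, ?_⟩
  have : n - x = 2 ^ m - 1 - x := by rw [hn]
  rw [this, wt2_compl m x (by omega), hxwt]
  omega

lemma kone (hm : m = 2 * s) (hs : 5 ≤ s) :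
    (2 ^ (s + 2) - 1) * (2 ^ (s - 2) + 1) % (2 ^ m - 1) = 15 * 2 ^ (s - 2) := by
  set B := (2:ℕ) ^ (s + 2) with hB
  set C := (2:ℕ) ^ (s - 2) with hC
  have hBC : B * C = 2 ^ m := by rw [hB, hC, ← pow_add]; congr 1; omega
  have hB16 : B = 16 * C := by
    rw [hB, hC, show s + 2 = 4 + (s - 2) by omega, pow_add]; norm_num
  have hp2 : B ≤ 2 ^ (m - 1) := Nat.pow_le_pow_right (by norm_num) (by omega)
  have hp3 : (2:ℕ) ^ m = 2 * 2 ^ (m - 1) := by rw [← pow_succ']; congr 1; omega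
  have hCpos : 0 < C := Nat.pow_pos (by norm_num)
  have t1 : (B - 1) * (C + 1) = B * (C + 1) - (C + 1) := by rw [tsub_mul, one_mul]
  have t2 : B * (C + 1) = B * C + B := by rw [mul_add, mul_one]
  have e3 : (B - 1) * (C + 1) = (2 ^ m - 1) + 15 * C := by omega
  rw [e3, Nat.add_mod_left]
  exact Nat.mod_eq_of_lt (by omega)

lemma ktwo (hm : m = 2 * s) (hs : 5 ≤ s) :
    (2 ^ (s + 2) - 1) * (2 ^ (s - 2) + 2) % (2 ^ m - 1) = 2 ^ (s + 3) - 2 ^ (s - 2) - 1 ∧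
      2 ^ (s + 3) - 2 ^ (s - 2) - 1 < 2 ^ m - 1 ∧
      wt2 (2 ^ (s + 3) - 2 ^ (s - 2) - 1) = s + 2 := by
  set B := (2:ℕ) ^ (s + 2) with hB
  set C := (2:ℕ) ^ (s - 2) with hC
  have hBC : B * C = 2 ^ m := by rw [hB, hC, ← pow_add]; congr 1; omega
  have hB16 : B = 16 * C := by
    rw [hB, hC, show s + 2 = 4 + (s - 2) by omega, pow_add]; norm_num
  have hB2 : (2:ℕ) ^ (s + 3) = 2 * B := by rw [hB, ← pow_succ']
  have hp2 : (2:ℕ) ^ (s + 3) ≤ 2 ^ (m - 1) := Nat.pow_le_pow_right (by norm_num) (by omega)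
  have hp3 : (2:ℕ) ^ m = 2 * 2 ^ (m - 1) := by rw [← pow_succ']; congr 1; omega
  have hCpos : 0 < C := Nat.pow_pos (by norm_num)
  have t1 : (B - 1) * (C + 2) = B * (C + 2) - (C + 2) := by rw [tsub_mul, one_mul]
  have t2 : B * (C + 2) = B * C + 2 * B := by rw [mul_add]; ring
  have hwt : wt2 (2 ^ (s + 3) - C - 1) = s + 2 := by
    have : (2:ℕ) ^ (s + 3) - C - 1 = 2 ^ (s + 3) - 1 - C := by omega
    rw [this, wt2_compl (s + 3) C (by omega), hC, wt2_pow]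
    omega
  refine ⟨?_, by omega, hwt⟩
  have e3 : (B - 1) * (C + 2) = (2 ^ m - 1) + (2 ^ (s + 3) - C - 1) := by omega
  rw [e3, Nat.add_mod_left]
  exact Nat.mod_eq_of_lt (by omega)
end

theorem stmt14 (m h : ℕ) (hm4 : m % 4 = 2) (hm : 10 ≤ m) (hh : 0 < h)
    (hh2 : h ≤ (m - 6) / 2) :
    (4 ≤ h → Even h → ∀ k, (1 ≤ k ∧ k ≤ 2 ^ ((m - 4) / 2) + 2) ∨
        (2 ^ m - 2 ^ ((m - 4) / 2) - 1 ≤ k ∧ k ≤ 2 ^ m - 2) →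
      (2 ^ ((m + 4) / 2) - 1) * k % (2 ^ m - 1) ∈ Dset m h 1) ∧
    (h ≤ 3 ∨ (4 ≤ h ∧ Odd h) → ∀ k, (1 ≤ k ∧ k ≤ 2 ^ ((m - 4) / 2)) ∨
        (2 ^ m - 2 ^ ((m - 4) / 2) - 1 ≤ k ∧ k ≤ 2 ^ m - 2) →
      (2 ^ ((m + 4) / 2) - 1) * k % (2 ^ m - 1) ∈ Dset m h 1) := by
  set s := m / 2 with hs
  have hms : m = 2 * s := by omega
  have hs5 : 5 ≤ s := by omega
  have hsodd : s % 2 = 1 := by omega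
  have hhs : h ≤ s - 3 := by omega
  have hp1 : (m + 4) / 2 = s + 2 := by omega
  have hp2 : (m - 4) / 2 = s - 2 := by omega
  have hme : m % 2 = 0 := by omega
  have hm0 : 0 < m := by omega
  rw [hp1, hp2]
  have hlowmem : ∀ k, 1 ≤ k → k ≤ 2 ^ (s - 2) →
      (2 ^ (s + 2) - 1) * k % (2 ^ m - 1) ∈ Dset m h 1 := by
    intro k hk1 hk2
    obtain ⟨hlt, hwt⟩ := klow m s hms hs5 k hk1 hk2
    rw [Nat.mod_eq_of_lt hlt]
    exact main_mem m _ h hm0 hme hh hlt (by omega) (by omega)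
  have hhighmem : ∀ k, 2 ^ m - 2 ^ (s - 2) - 1 ≤ k → k ≤ 2 ^ m - 2 →
      (2 ^ (s + 2) - 1) * k % (2 ^ m - 1) ∈ Dset m h 1 := by
    intro k hk1 hk2
    obtain ⟨hlt, hwt⟩ := khigh m s hms hs5 k hk1 hk2
    exact main_mem m _ h hm0 hme hh hlt (by omega) (by omega)
  constructor
  · intro hh4 hheven k hk
    have hev : h % 2 = 0 := Nat.even_iff.mp hheven
    rcases hk with ⟨hk1, hk2⟩ | ⟨hk1, hk2⟩
    · rcases Nat.lt_or_ge (2 ^ (s - 2)) k with hgt | hle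
      · rcases (by omega : k = 2 ^ (s - 2) + 1 ∨ k = 2 ^ (s - 2) + 2) with h1 | h2
        · rw [h1, kone m s hms hs5]
          exact case_k1 m s h hms hs5 hme hh4 hev
        · obtain ⟨hmod, hlt, hwt⟩ := ktwo m s hms hs5
          rw [h2, hmod]
          exact main_mem m _ h hm0 hme hh hlt (by omega) (by omega)
      · exact hlowmem k hk1 hle
    · exact hhighmem k hk1 hk2
  · intro _ k hk
    rcases hk with ⟨hk1, hk2⟩ | ⟨hk1, hk2⟩
    · exact hlowmem k hk1 hk2
    · exact hhighmem k hk1 hk2
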